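/- Continuous-time policy improvement: Let π, π' be policies with V^π, V^{π'} continuously differentiable, s ↦ r(s,π(s)) and s ↦ r(s,π'(s)) continuous, and define A^π(s,a) = r(s,a) + log(γ) V^π(s) + ∇V^π(s)·F(s,a). If A^π(s, π'(s)) ≥ 0 for all s, then V^π(s) ≤ V^{π'}(s) for all s. Moreover, if V^{π'}(s) > V^π(s) for some s, then there exists s' with A^π(s', π'(s')) > 0. -/

import Mathlib

open Real Filter intervalIntegral

/-- Continuous-time policy improvement: if the continuous-time advantage of `π` evaluated
at the actions of `π'` is everywhere nonnegative, then `π'` dominates `π`; and if `π'`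
strictly improves on `π` somewhere, then the advantage is strictly positive somewhere. -/
theorem continuous_time_policy_improvement
    {n : ℕ} {A : Type*} (γ : ℝ) (hγ0 : 0 < γ) (hγ1 : γ < 1)
    (F : EuclideanSpace ℝ (Fin n) → A → EuclideanSpace ℝ (Fin n))
    (r : EuclideanSpace ℝ (Fin n) → A → ℝ)
    (pol pol' : EuclideanSpace ℝ (Fin n) → A)
    (Vpol Vpol' : EuclideanSpace ℝ (Fin n) → ℝ)
    (hVpol : ContDiff ℝ 1 Vpol) (hVpol' : ContDiff ℝ 1 Vpol')
    (hrcont : Continuous (fun s => r s (pol s)))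
    (hrcont' : Continuous (fun s => r s (pol' s)))
    -- trajectories under π' from any initial state
    (u : EuclideanSpace ℝ (Fin n) → ℝ → EuclideanSpace ℝ (Fin n))
    (hu0 : ∀ s, u s 0 = s)
    (hu : ∀ s, ∀ t : ℝ, 0 ≤ t → HasDerivAt (u s) (F (u s t) (pol' (u s t))) t)
    -- HJB identity for V^π along π
    (hHJB : ∀ s, r s (pol s) + fderiv ℝ Vpol s (F s (pol s))
      + Real.log γ * Vpol s = 0)
    -- V^{π'} is the limit of the discounted partial return plus discounted value
    (hlim : ∀ s, Tendsto (fun T : ℝ =>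
        (∫ t in (0:ℝ)..T, Real.exp (t * Real.log γ) * r (u s t) (pol' (u s t)))
        + Real.exp (T * Real.log γ) * Vpol (u s T)) atTop (nhds (Vpol' s))) :
    ((∀ s, 0 ≤ r s (pol' s) + Real.log γ * Vpol s
        + fderiv ℝ Vpol s (F s (pol' s))) →
      ∀ s, Vpol s ≤ Vpol' s) ∧
    ((∃ s, Vpol s < Vpol' s) →
      ∃ s', 0 < r s' (pol' s') + Real.log γ * Vpol s'
        + fderiv ℝ Vpol s' (F s' (pol' s'))) := by
  set L := Real.log γ with hLdef
  set Adv : EuclideanSpace ℝ (Fin n) → ℝ := fun x =>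
    r x (pol' x) + L * Vpol x + fderiv ℝ Vpol x (F x (pol' x)) with hAdvdef
  -- main construction: a function g that equals the discounted partial return,
  -- is continuous, starts at Vpol s, tends to Vpol' s, and has derivative
  -- exp (T * L) * Adv (u s T) at every T > 0.
  have key : ∀ s : EuclideanSpace ℝ (Fin n), ∃ g : ℝ → ℝ,
      Continuous g ∧ g 0 = Vpol s ∧ Tendsto g atTop (nhds (Vpol' s)) ∧
      ∀ T : ℝ, 0 < T → HasDerivAt g (Real.exp (T * L) * Adv (u s T)) T := by
    intro s
    have hucont : ∀ t : ℝ, 0 ≤ t → ContinuousAt (u s) t :=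
      fun t ht => (hu s t ht).continuousAt
    set m : ℝ → ℝ := fun t => max t 0 with hmdef
    have hmc : Continuous m := continuous_id.max continuous_const
    have hum : Continuous (fun t => u s (m t)) := by
      rw [continuous_iff_continuousAt]
      intro t
      exact (hucont (m t) (le_max_right _ _)).comp hmc.continuousAt
    set f : ℝ → ℝ := fun t => Real.exp (t * L) * r (u s (m t)) (pol' (u s (m t)))
      with hfdef
    have hfc : Continuous f :=
      (Real.continuous_exp.comp (continuous_id.mul continuous_const)).mul
        (hrcont'.comp hum)
    refine ⟨fun T => (∫ t in (0:ℝ)..T, f t) + Real.exp (T * L) * Vpol (u s (m T)),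
      ?_, ?_, ?_, ?_⟩
    · exact (intervalIntegral.continuous_primitive
        (fun a b => hfc.intervalIntegrable a b) 0).add
        ((Real.continuous_exp.comp (continuous_id.mul continuous_const)).mul
          ((hVpol.continuous).comp hum))
    · simp [hmdef, hu0 s]
    · refine (hlim s).congr' ?_
      filter_upwards [eventually_ge_atTop (0:ℝ)] with T hT
      have hmT : m T = T := max_eq_left hT
      have : (∫ t in (0:ℝ)..T, Real.exp (t * L) * r (u s t) (pol' (u s t)))
          = ∫ t in (0:ℝ)..T, f t := by
        refine intervalIntegral.integral_congr (fun t ht => ?_)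
        rw [Set.uIcc_of_le hT] at ht
        simp [hfdef, hmdef, max_eq_left ht.1]
      rw [this, hmT]
    · intro T hT
      have h1 : HasDerivAt (fun T => ∫ t in (0:ℝ)..T, f t) (f T) T :=
        (hfc.integral_hasStrictDerivAt 0 T).hasDerivAt
      have he : HasDerivAt (fun T : ℝ => Real.exp (T * L)) (Real.exp (T * L) * L) T := by
        simpa [Function.comp_def] using (Real.hasDerivAt_exp (T * L)).comp T ((hasDerivAt_id T).mul_const L)
      have hV : HasDerivAt (fun T => Vpol (u s T))
          (fderiv ℝ Vpol (u s T) (F (u s T) (pol' (u s T)))) T :=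
        (hVpol.differentiable one_ne_zero (u s T)).hasFDerivAt.comp_hasDerivAt T (hu s T hT.le)
      have h2' : HasDerivAt (fun T => Real.exp (T * L) * Vpol (u s T))
          (Real.exp (T * L) * L * Vpol (u s T)
            + Real.exp (T * L) * fderiv ℝ Vpol (u s T) (F (u s T) (pol' (u s T)))) T :=
        he.mul hV
      have hev : (fun T => Real.exp (T * L) * Vpol (u s (m T)))
          =ᶠ[nhds T] (fun T => Real.exp (T * L) * Vpol (u s T)) := by
        filter_upwards [Ioi_mem_nhds hT] with x hx
        simp [hmdef, max_eq_left (le_of_lt (Set.mem_Ioi.mp hx))]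
      have h2 : HasDerivAt (fun T => Real.exp (T * L) * Vpol (u s (m T)))
          (Real.exp (T * L) * L * Vpol (u s T)
            + Real.exp (T * L) * fderiv ℝ Vpol (u s T) (F (u s T) (pol' (u s T)))) T :=
        h2'.congr_of_eventuallyEq hev
      have := h1.add h2
      have hfT : f T = Real.exp (T * L) * r (u s T) (pol' (u s T)) := by
        simp [hfdef, hmdef, max_eq_left hT.le]
      refine this.congr_deriv ?_
      rw [hfT, hAdvdef]
      ring
  constructor
  · intro hA s
    obtain ⟨g, hgc, hg0, hgt, hgd⟩ := key s
    have mono : MonotoneOn g (Set.Ici (0:ℝ)) := by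
      refine monotoneOn_of_deriv_nonneg (convex_Ici 0) hgc.continuousOn ?_ ?_
      · intro x hx
        rw [interior_Ici] at hx
        exact ((hgd x hx).differentiableAt).differentiableWithinAt
      · intro x hx
        rw [interior_Ici] at hx
        rw [(hgd x hx).deriv]
        have : 0 ≤ Adv (u s x) := hA (u s x)
        exact mul_nonneg (Real.exp_pos _).le this
    have : ∀ᶠ T in atTop, g 0 ≤ g T := by
      filter_upwards [eventually_ge_atTop (0:ℝ)] with T hT
      exact mono Set.self_mem_Ici hT hT
    have := ge_of_tendsto hgt this
    rwa [hg0] at this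
  · intro hex
    by_contra hA
    push_neg at hA
    obtain ⟨s, hs⟩ := hex
    obtain ⟨g, hgc, hg0, hgt, hgd⟩ := key s
    have anti : AntitoneOn g (Set.Ici (0:ℝ)) := by
      refine antitoneOn_of_deriv_nonpos (convex_Ici 0) hgc.continuousOn ?_ ?_
      · intro x hx
        rw [interior_Ici] at hx
        exact ((hgd x hx).differentiableAt).differentiableWithinAt
      · intro x hx
        rw [interior_Ici] at hx
        rw [(hgd x hx).deriv]
        have : Adv (u s x) ≤ 0 := hA (u s x)
        exact mul_nonpos_of_nonneg_of_nonpos (Real.exp_pos _).le this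
    have : ∀ᶠ T in atTop, g T ≤ g 0 := by
      filter_upwards [eventually_ge_atTop (0:ℝ)] with T hT
      exact anti Set.self_mem_Ici hT hT
    have hle := le_of_tendsto hgt this
    rw [hg0] at hle
    exact absurd hs (not_lt.mpr hle)
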